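/- Let $h(x) = -x \log_2 x - (1-x)\log_2(1-x)$ for $x \in (0,1)$ with $h(0)=h(1)=0$, and define $E(x) = h\left(\frac{1+\sqrt{1-x}}{2}\right)$ for $x \in [0,1]$. Let $C, C_1, \dots, C_n \in [0,1]$ satisfy $C^2 \geq \sum_{j=1}^n C_j^2$. Then $E(C^2)^2 \geq \sum_{j=1}^n E(C_j^2)^2$. (Monogamy of the squared entanglement of formation follows from monogamy of the squared concurrence.) -/

import Mathlib

/-- The Shannon binary entropy `h(x) = -x log₂ x - (1-x) log₂(1-x)`.
(With Mathlib's convention `log 0 = 0`, this automatically satisfies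
`h 0 = 0` and `h 1 = 0`.) -/
noncomputable def binaryEntropy (x : ℝ) : ℝ :=
  -x * Real.logb 2 x - (1 - x) * Real.logb 2 (1 - x)

/-- Entanglement of formation as a function of the squared concurrence:
`E(x) = h((1 + √(1-x))/2)`. -/
noncomputable def eofOfSqConc (x : ℝ) : ℝ :=
  binaryEntropy ((1 + Real.sqrt (1 - x)) / 2)

open Real Set

lemma binEntropy_formula (p : ℝ) :
    Real.binEntropy p = -(p * Real.log p) - (1 - p) * Real.log (1 - p) := by
  rw [Real.binEntropy, Real.log_inv, Real.log_inv]; ring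

lemma binaryEntropy_eq (y : ℝ) :
    binaryEntropy y = Real.binEntropy y / Real.log 2 := by
  rw [binaryEntropy, binEntropy_formula, Real.logb, Real.logb]; ring

/-- Key scalar inequality: `q log q ≤ (1-q) log (1-q)` for `q ∈ [0, 1/2]`. -/
lemma aux_qlogq {q : ℝ} (hq0 : 0 ≤ q) (hq : q ≤ 1/2) :
    q * Real.log q ≤ (1 - q) * Real.log (1 - q) := by
  rcases eq_or_lt_of_le hq0 with h0 | h0
  · simp [← h0]
  have h1 : Real.log q ≤ 2*q - 1 - Real.log 2 := by
    have h := Real.log_le_sub_one_of_pos (by linarith : (0:ℝ) < 2*q)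
    rw [Real.log_mul (by norm_num) (ne_of_gt h0)] at h
    linarith
  have h2 : -(2*q) * Real.log 2 ≤ Real.log (1 - q) := by
    have hcc := strictConcaveOn_log_Ioi.concaveOn.2
      (by norm_num : (1/2:ℝ) ∈ Ioi (0:ℝ)) (by norm_num : (1:ℝ) ∈ Ioi (0:ℝ))
      (by linarith : (0:ℝ) ≤ 2*q) (by linarith : (0:ℝ) ≤ 1 - 2*q) (by ring : 2*q + (1 - 2*q) = 1)
    simp only [smul_eq_mul, Real.log_one, mul_zero, mul_one] at hcc
    have he : (2*q) * (1/2) + (1 - 2*q) = 1 - q := by ring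
    rw [he] at hcc
    have hl : Real.log (1/2) = -Real.log 2 := by rw [one_div, Real.log_inv]
    rw [hl] at hcc
    linarith
  have hlog2 : Real.log 2 < 1 := by
    have := Real.log_two_lt_d9; linarith
  have A : q * Real.log q ≤ q * (2*q - 1 - Real.log 2) :=
    mul_le_mul_of_nonneg_left h1 hq0
  have B : (1-q) * (-(2*q) * Real.log 2) ≤ (1-q) * Real.log (1-q) :=
    mul_le_mul_of_nonneg_left h2 (by linarith)
  nlinarith [mul_nonneg (mul_nonneg hq0 (by linarith : (0:ℝ) ≤ 1 - 2*q))
    (by linarith : (0:ℝ) ≤ 1 - Real.log 2)]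

/-- `binEntropy p ^ 2 / (4 p (1-p))` is antitone on `[1/2, 1)`. -/
lemma H_antitone :
    AntitoneOn (fun p => (Real.binEntropy p)^2 / (4*p*(1-p))) (Set.Ico (1/2:ℝ) 1) := by
  apply antitoneOn_of_deriv_nonpos (convex_Ico _ _)
  · apply ContinuousOn.div
    · exact (Real.binEntropy_continuous.pow 2).continuousOn
    · fun_prop
    · rintro p ⟨h1, h2⟩
      have : (0:ℝ) < 4*p*(1-p) := by nlinarith
      positivity
  · rw [interior_Ico]
    rintro p ⟨h1, h2⟩
    have hp0 : (0:ℝ) < p := by linarith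
    have hD : (4*p*(1-p)) ≠ 0 := by nlinarith
    apply DifferentiableAt.differentiableWithinAt
    exact DifferentiableAt.div
      ((Real.differentiableAt_binEntropy (by linarith) (by linarith)).pow 2)
      (by fun_prop) hD
  · rw [interior_Ico]
    rintro p ⟨h1, h2⟩
    have hp0 : (0:ℝ) < p := by linarith
    have hDpos : (0:ℝ) < 4*p*(1-p) := by nlinarith
    have hN : HasDerivAt (fun p => (Real.binEntropy p)^2)
        (2 * Real.binEntropy p * (Real.log (1-p) - Real.log p)) p := by
      have := (Real.hasDerivAt_binEntropy (p := p) (by linarith) (by linarith)).pow 2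
      refine this.congr_deriv ?_; ring
    have hD : HasDerivAt (fun p : ℝ => 4*p*(1-p)) (4 - 8*p) p := by
      have := (((hasDerivAt_id p).const_mul (4:ℝ)).mul
        ((hasDerivAt_const p (1:ℝ)).sub (hasDerivAt_id p)))
      refine this.congr_deriv ?_; simp only [Pi.sub_apply, id]; ring
    have hF := hN.div hD (ne_of_gt hDpos)
    rw [show (fun p => Real.binEntropy p ^ 2 / (4 * p * (1 - p))) =
      ((fun p => Real.binEntropy p ^ 2) / fun p => 4 * p * (1 - p)) from rfl, hF.deriv]
    apply div_nonpos_of_nonpos_of_nonneg _ (sq_nonneg _)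
    have hq := aux_qlogq (q := 1-p) (by linarith) (by linarith)
    rw [sub_sub_cancel] at hq
    have hnn : 0 ≤ Real.binEntropy p := Real.binEntropy_nonneg (by linarith) (by linarith)
    rw [binEntropy_formula] at hnn ⊢
    nlinarith [mul_nonneg hnn (sub_nonneg.mpr hq)]

lemma p_mem {x : ℝ} (hx0 : 0 < x) (hx1 : x ≤ 1) :
    (1 + Real.sqrt (1 - x)) / 2 ∈ Set.Ico (1/2:ℝ) 1 := by
  have ht0 : 0 ≤ Real.sqrt (1 - x) := Real.sqrt_nonneg _
  have ht2 : Real.sqrt (1 - x) ^ 2 = 1 - x := Real.sq_sqrt (by linarith)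
  have ht1 : Real.sqrt (1 - x) < 1 := by nlinarith
  constructor <;> [linarith; linarith]

lemma p_denom {x : ℝ} (hx0 : 0 ≤ x) (hx1 : x ≤ 1) :
    4 * ((1 + Real.sqrt (1 - x)) / 2) * (1 - (1 + Real.sqrt (1 - x)) / 2) = x := by
  have ht2 : Real.sqrt (1 - x) ^ 2 = 1 - x := Real.sq_sqrt (by linarith)
  nlinarith [ht2]

/-- Star-shapedness: `E(x)²/x` is monotone on `(0,1]`. -/
lemma eof_star {x y : ℝ} (hx : 0 < x) (hxy : x ≤ y) (hy : y ≤ 1) :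
    eofOfSqConc x ^ 2 / x ≤ eofOfSqConc y ^ 2 / y := by
  have hxm := p_mem hx (le_trans hxy hy)
  have hym := p_mem (lt_of_lt_of_le hx hxy) hy
  have hple : (1 + Real.sqrt (1 - y)) / 2 ≤ (1 + Real.sqrt (1 - x)) / 2 := by
    have := Real.sqrt_le_sqrt (by linarith : 1 - y ≤ 1 - x)
    linarith
  have hH := H_antitone hym hxm hple
  simp only at hH
  rw [p_denom hx.le (le_trans hxy hy), p_denom (by linarith : (0:ℝ) ≤ y) hy] at hH
  have hlog2 : (0:ℝ) < Real.log 2 := Real.log_pos (by norm_num)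
  rw [eofOfSqConc, eofOfSqConc, binaryEntropy_eq, binaryEntropy_eq, div_pow, div_pow]
  rw [div_div, div_div, mul_comm (Real.log 2 ^ 2) x, mul_comm (Real.log 2 ^ 2) y,
    ← div_div, ← div_div]
  exact div_le_div_of_nonneg_right hH (by positivity) |>.trans_eq rfl
    |>.trans (le_refl _)

lemma eof_nonneg {x : ℝ} (hx0 : 0 ≤ x) (hx1 : x ≤ 1) : 0 ≤ eofOfSqConc x := by
  have ht0 : 0 ≤ Real.sqrt (1 - x) := Real.sqrt_nonneg _
  have ht1 : Real.sqrt (1 - x) ≤ 1 := by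
    calc Real.sqrt (1 - x) ≤ Real.sqrt 1 := Real.sqrt_le_sqrt (by linarith)
      _ = 1 := Real.sqrt_one
  rw [eofOfSqConc, binaryEntropy_eq]
  have := Real.binEntropy_nonneg (p := (1 + Real.sqrt (1 - x)) / 2)
    (by linarith) (by linarith)
  positivity

lemma eof_zero : eofOfSqConc 0 = 0 := by
  simp [eofOfSqConc, binaryEntropy]

/-- **Monogamy of the squared entanglement of formation** follows from the
Coffman–Kundu–Wootters monogamy of the squared concurrence. -/
theorem sq_eof_monogamy
    (n : ℕ) (C : ℝ) (Cs : Fin n → ℝ)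
    (hC : C ∈ Set.Icc (0:ℝ) 1) (hCs : ∀ j, Cs j ∈ Set.Icc (0:ℝ) 1)
    (hmono : ∑ j, Cs j ^ 2 ≤ C ^ 2) :
    ∑ j, eofOfSqConc (Cs j ^ 2) ^ 2 ≤ eofOfSqConc (C ^ 2) ^ 2 := by
  obtain ⟨hC0, hC1⟩ := hC
  have hsingle : ∀ j : Fin n, Cs j ^ 2 ≤ C ^ 2 := fun j =>
    le_trans (Finset.single_le_sum (fun i _ => sq_nonneg (Cs i)) (Finset.mem_univ j)) hmono
  by_cases hCz : C ^ 2 = 0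
  · have hall : ∀ j : Fin n, Cs j ^ 2 = 0 := fun j =>
      le_antisymm (hCz ▸ hsingle j) (sq_nonneg _)
    simp [hall, hCz, eof_zero]
  · have hCpos : 0 < C ^ 2 := lt_of_le_of_ne (sq_nonneg C) (Ne.symm hCz)
    have hC2le1 : C ^ 2 ≤ 1 := by nlinarith
    have hKnn : 0 ≤ eofOfSqConc (C ^ 2) ^ 2 / C ^ 2 :=
      div_nonneg (sq_nonneg _) hCpos.le
    have hterm : ∀ j : Fin n,
        eofOfSqConc (Cs j ^ 2) ^ 2 ≤ Cs j ^ 2 * (eofOfSqConc (C ^ 2) ^ 2 / C ^ 2) := by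
      intro j
      by_cases h0 : Cs j ^ 2 = 0
      · rw [h0, eof_zero]
        simp
      · have hpos : 0 < Cs j ^ 2 := lt_of_le_of_ne (sq_nonneg _) (Ne.symm h0)
        have hst := eof_star hpos (hsingle j) hC2le1
        calc eofOfSqConc (Cs j ^ 2) ^ 2
            = Cs j ^ 2 * (eofOfSqConc (Cs j ^ 2) ^ 2 / Cs j ^ 2) := by rw [mul_div_cancel₀ _ hpos.ne']
          _ ≤ Cs j ^ 2 * (eofOfSqConc (C ^ 2) ^ 2 / C ^ 2) :=
              mul_le_mul_of_nonneg_left hst hpos.le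
    calc ∑ j, eofOfSqConc (Cs j ^ 2) ^ 2
        ≤ ∑ j, Cs j ^ 2 * (eofOfSqConc (C ^ 2) ^ 2 / C ^ 2) :=
          Finset.sum_le_sum fun j _ => hterm j
      _ = (∑ j, Cs j ^ 2) * (eofOfSqConc (C ^ 2) ^ 2 / C ^ 2) := by
          rw [Finset.sum_mul]
      _ ≤ C ^ 2 * (eofOfSqConc (C ^ 2) ^ 2 / C ^ 2) :=
          mul_le_mul_of_nonneg_right hmono hKnn
      _ = eofOfSqConc (C ^ 2) ^ 2 := by rw [mul_div_cancel₀ _ hCpos.ne']
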